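/- Let p ≥ 5 be a prime. Then N_{φ(p-1)} ≥ (p+1)^{φ(p-1)/2}. -/

import Mathlib

open Filter Real Finset

/-- A prime primitive root modulo `p`: a prime `ℓ` whose residue class has
multiplicative order `p - 1` in `(ℤ/pℤ)ˣ`. -/
def IsPrimePrimitiveRoot (p ℓ : ℕ) : Prop :=
  ℓ.Prime ∧ orderOf (ℓ : ZMod p) = p - 1

lemma orderOf_inv₀ {K : Type*} [GroupWithZero K] (a : K) : orderOf a⁻¹ = orderOf a := by
  simp [orderOf_eq_orderOf_iff, inv_pow, inv_eq_one]

lemma ppr_infinite {p : ℕ} (hp : p.Prime) :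
    {ℓ | IsPrimePrimitiveRoot p ℓ}.Infinite := by
  haveI : Fact p.Prime := ⟨hp⟩
  haveI : NeZero p := ⟨hp.pos.ne'⟩
  obtain ⟨u, hu⟩ := IsCyclic.exists_generator (α := (ZMod p)ˣ)
  have hord : orderOf ((u : (ZMod p)ˣ) : ZMod p) = p - 1 := by
    rw [orderOf_units, orderOf_eq_card_of_forall_mem_zpowers hu, Nat.card_eq_fintype_card,
      ZMod.card_units]
  have h := Nat.infinite_setOfPred_prime_and_eq_mod (q := p) (a := (u : ZMod p)) u.isUnit
  refine h.mono ?_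
  rintro ℓ ⟨h1, h2⟩
  exact ⟨h1, by rw [h2, hord]⟩

lemma card_order_le {p : ℕ} (hp : p.Prime) (F : Finset (ZMod p))
    (hF : ∀ a ∈ F, orderOf a = p - 1) : F.card ≤ Nat.totient (p - 1) := by
  haveI : Fact p.Prime := ⟨hp⟩
  haveI : NeZero p := ⟨hp.pos.ne'⟩
  classical
  have hu : (Finset.univ.filter fun u : (ZMod p)ˣ => orderOf u = p - 1).card
      = Nat.totient (p - 1) := by
    have := IsCyclic.card_orderOf_eq_totient (α := (ZMod p)ˣ) (d := p - 1)
      (by rw [ZMod.card_units])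
    simpa using this
  have h : (Finset.univ.filter fun u : (ZMod p)ˣ => orderOf u = p - 1).card
      = (Finset.univ.filter fun a : ZMod p => orderOf a = p - 1).card := by
    refine Finset.card_bij (fun u _ => (u : ZMod p)) ?_ ?_ ?_
    · intro u hu'
      simp only [Finset.mem_filter, Finset.mem_univ, true_and] at hu' ⊢
      rw [orderOf_units]; exact hu'
    · intro a _ b _ hab; exact Units.ext hab
    · intro a ha
      simp only [Finset.mem_filter, Finset.mem_univ, true_and] at ha
      have ha0 : a ≠ 0 := by
        intro h0
        have hpo := pow_orderOf_eq_one a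
        rw [ha, h0, zero_pow (by have := hp.two_le; omega)] at hpo
        exact zero_ne_one hpo
      refine ⟨Units.mk0 a ha0, ?_, rfl⟩
      simp only [Finset.mem_filter, Finset.mem_univ, true_and]
      rw [← orderOf_units, Units.val_mk0]; exact ha
  calc F.card ≤ (Finset.univ.filter fun a : ZMod p => orderOf a = p - 1).card :=
        Finset.card_le_card (fun a haF => by
          simp only [Finset.mem_filter, Finset.mem_univ, true_and]; exact hF a haF)
    _ = Nat.totient (p - 1) := by rw [← h, hu]
lemma key_pair {p : ℕ} (hp : p.Prime) (hp5 : 5 ≤ p) {i j : ℕ}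
    (hij : i + j + 1 = Nat.totient (p - 1)) :
    p + 1 ≤ Nat.nth (IsPrimePrimitiveRoot p) i * Nat.nth (IsPrimePrimitiveRoot p) j := by
  haveI : Fact p.Prime := ⟨hp⟩
  haveI : NeZero p := ⟨hp.pos.ne'⟩
  classical
  set x := Nat.nth (IsPrimePrimitiveRoot p) with hxdef
  have hinf := ppr_infinite hp
  have hmem : ∀ k, IsPrimePrimitiveRoot p (x k) := fun k => Nat.nth_mem_of_infinite hinf k
  have hmono : StrictMono x := Nat.nth_strictMono hinf
  by_contra hcon
  push_neg at hcon
  have hle : x i * x j ≤ p := by omega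
  have h2 : ∀ k, 2 ≤ x k := fun k => (hmem k).1.two_le
  have hxjp : x j < p := by nlinarith [h2 i, h2 j]
  have hxip : x i < p := by nlinarith [h2 i, h2 j]
  have hne0 : ∀ k, (x k : ZMod p) ≠ 0 := by
    intro k h0
    have hpo := pow_orderOf_eq_one ((x k : ZMod p))
    rw [(hmem k).2, h0, zero_pow (by omega)] at hpo
    exact zero_ne_one hpo
  have hvalj : ∀ k ≤ j, ((x k : ZMod p)).val = x k := fun k hk =>
    ZMod.val_cast_of_lt ((hmono.monotone hk).trans_lt hxjp)
  have hvali : ∀ k ≤ i, ((x k : ZMod p)).val = x k := fun k hk =>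
    ZMod.val_cast_of_lt ((hmono.monotone hk).trans_lt hxip)
  -- lower bound for value of inverses
  have hinv : ∀ k ≤ i, x j < (((x k : ZMod p))⁻¹).val := by
    intro k hk
    set b := ((x k : ZMod p))⁻¹ with hb
    have hb0 : b ≠ 0 := inv_ne_zero (hne0 k)
    have hb1 : 1 ≤ b.val := ZMod.val_pos.mpr hb0
    have hmul : ((x k * b.val : ℕ) : ZMod p) = 1 := by
      push_cast
      rw [ZMod.natCast_val, ZMod.cast_id, hb, mul_inv_cancel₀ (hne0 k)]
    have hmod : (x k * b.val) % p = 1 := by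
      have hv := ZMod.val_natCast (n := p) (x k * b.val)
      rw [hmul] at hv
      rw [← hv, ZMod.val_one]
    have hmge : p + 1 ≤ x k * b.val := by
      by_contra hlt
      push_neg at hlt
      rcases eq_or_lt_of_le (Nat.lt_succ_iff.mp hlt) with heq | hltp'
      · rw [heq, Nat.mod_self] at hmod; omega
      · rw [Nat.mod_eq_of_lt hltp'] at hmod; nlinarith [h2 k]
    have hlt2 : x k * x j < x k * b.val :=
      calc x k * x j ≤ x i * x j := Nat.mul_le_mul_right _ (hmono.monotone hk)
        _ ≤ p := hle
        _ < x k * b.val := by omega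
    exact Nat.lt_of_mul_lt_mul_left hlt2
  -- the two finsets of residues
  set F1 : Finset (ZMod p) := (Finset.range (j + 1)).image (fun k => (x k : ZMod p)) with hF1
  set F2 : Finset (ZMod p) :=
    (Finset.range (i + 1)).image (fun k => ((x k : ZMod p))⁻¹) with hF2
  have hF1card : F1.card = j + 1 := by
    rw [hF1, Finset.card_image_of_injOn, Finset.card_range]
    intro a ha b hb hab
    simp only [Finset.coe_range, Set.mem_Iio] at ha hb
    have hv := congrArg ZMod.val hab
    rw [hvalj a (by omega), hvalj b (by omega)] at hv
    exact hmono.injective hv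
  have hF2card : F2.card = i + 1 := by
    rw [hF2, Finset.card_image_of_injOn, Finset.card_range]
    intro a ha b hb hab
    simp only [Finset.coe_range, Set.mem_Iio] at ha hb
    have hab' := inv_injective hab
    have hv := congrArg ZMod.val hab'
    rw [hvali a (by omega), hvali b (by omega)] at hv
    exact hmono.injective hv
  have hdisj : Disjoint F1 F2 := by
    rw [Finset.disjoint_left]
    intro a ha1 ha2
    rw [hF1, Finset.mem_image] at ha1
    rw [hF2, Finset.mem_image] at ha2
    obtain ⟨k1, hk1, rfl⟩ := ha1
    obtain ⟨k2, hk2, heq⟩ := ha2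
    rw [Finset.mem_range] at hk1 hk2
    have h1 : ((x k1 : ZMod p)).val ≤ x j := by
      rw [hvalj k1 (by omega)]; exact hmono.monotone (by omega)
    have h2' := hinv k2 (by omega)
    rw [heq] at h2'
    omega
  have hsub : ∀ a ∈ F1 ∪ F2, orderOf a = p - 1 := by
    intro a ha
    rw [Finset.mem_union, hF1, hF2, Finset.mem_image, Finset.mem_image] at ha
    rcases ha with ⟨k, _, rfl⟩ | ⟨k, _, rfl⟩
    · exact (hmem k).2
    · rw [orderOf_inv₀]; exact (hmem k).2
  have hcard : (F1 ∪ F2).card = i + j + 2 := by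
    rw [Finset.card_union_of_disjoint hdisj, hF1card, hF2card]; omega
  have := card_order_le hp (F1 ∪ F2) hsub
  omega
/-- `pprNth p t` is `x_t`, the `t`-th smallest prime primitive root modulo `p` (1-indexed). -/
noncomputable def pprNth (p t : ℕ) : ℕ :=
  Nat.nth (IsPrimePrimitiveRoot p) (t - 1)

/-- `pprProd p t` is `N_t = x_1 ⋯ x_t`, with `N_0 = 1`. -/
noncomputable def pprProd (p t : ℕ) : ℕ :=
  ∏ i ∈ Finset.range t, Nat.nth (IsPrimePrimitiveRoot p) i

/-- `gstar p N` is `g*(p, N)`, the least prime primitive root modulo `p` not dividing `N`. -/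
noncomputable def gstar (p N : ℕ) : ℕ :=
  sInf {ℓ : ℕ | IsPrimePrimitiveRoot p ℓ ∧ ¬ ℓ ∣ N}

/-- The generalized Riemann hypothesis for Dirichlet L-functions. -/
def GRH : Prop :=
  ∀ (q : ℕ) [NeZero q] (χ : DirichletCharacter ℂ q) (s : ℂ),
    0 < s.re → s.re < 1 → DirichletCharacter.LFunction χ s = 0 → s.re = 1 / 2

/-- `primesCount a q x = π_{a,q}(x)`, the number of primes `ℓ ≤ x` with `ℓ ≡ a (mod q)`. -/
noncomputable def primesCount (a q : ℕ) (x : ℝ) : ℕ :=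
  ((Finset.range (⌊x⌋₊ + 1)).filter fun ℓ => ℓ.Prime ∧ ℓ % q = a % q).card

theorem pprProd_totient_lower_bound (p : ℕ) (hp : p.Prime) (hp5 : 5 ≤ p) :
    ((p : ℝ) + 1) ^ ((Nat.totient (p - 1) : ℝ) / 2)
      ≤ (pprProd p (Nat.totient (p - 1)) : ℝ) := by
  set t := Nat.totient (p - 1) with ht
  set x := Nat.nth (IsPrimePrimitiveRoot p) with hxdef
  have hsq : (p + 1) ^ t ≤ (pprProd p t) ^ 2 := by
    have hprod : (pprProd p t) ^ 2 = ∏ i ∈ Finset.range t, (x i * x (t - 1 - i)) := by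
      rw [Finset.prod_mul_distrib, sq, pprProd]
      congr 1
      exact (Finset.prod_range_reflect x t).symm
    rw [hprod]
    calc (p + 1) ^ t = ∏ _i ∈ Finset.range t, (p + 1) := by
          rw [Finset.prod_const, Finset.card_range]
      _ ≤ ∏ i ∈ Finset.range t, (x i * x (t - 1 - i)) := by
          apply Finset.prod_le_prod (fun _ _ => Nat.zero_le _)
          intro i hi
          rw [Finset.mem_range] at hi
          exact key_pair hp hp5 (by omega)
  have h0 : (0 : ℝ) ≤ (p : ℝ) + 1 := by positivity
  have hNat : ((p : ℝ) + 1) ^ (t : ℕ) ≤ ((pprProd p t : ℕ) : ℝ) ^ (2 : ℕ) := by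
    exact_mod_cast hsq
  have hr := Real.rpow_le_rpow (by positivity) hNat (by norm_num : (0:ℝ) ≤ 1/2)
  rw [← Real.rpow_natCast ((p : ℝ) + 1) t, ← Real.rpow_natCast ((pprProd p t : ℕ) : ℝ) 2,
    ← Real.rpow_mul h0, ← Real.rpow_mul (by positivity)] at hr
  norm_num at hr
  convert hr using 2
  ring
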